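/- Let ω be a fixed discrete random variable and define f on finite sets A of discrete random variables by f(A) = I(A ; ω), the mutual information between the joint of the variables in A and ω, where all members of the ground set are mutually conditionally independent given ω. Then f is submodular: for any set A and any two distinct variables y₁, y₂ not in A, f(A ∪ {y₁}) + f(A ∪ {y₂}) ≥ f(A ∪ {y₁, y₂}) + f(A). -/

import Mathlib

open scoped BigOperators Classical

/-- Probability that the discrete random variable `X` takes value `a`,
under weight function `p` on a finite sample space. -/
noncomputable def pr {Ω α : Type*} [Fintype Ω] (p : Ω → ℝ) (X : Ω → α) (a : α) : ℝ :=
  ∑ s : Ω, if X s = a then p s else 0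

/-- Shannon entropy of a discrete random variable. -/
noncomputable def ent {Ω α : Type*} [Fintype Ω] [Fintype α] (p : Ω → ℝ) (X : Ω → α) : ℝ :=
  ∑ a : α, Real.negMulLog (pr p X a)

/-- Conditional Shannon entropy `H(X | Y) = ∑_b P(Y=b) H(X | Y=b)`. -/
noncomputable def condEnt {Ω α β : Type*} [Fintype Ω] [Fintype α] [Fintype β]
    (p : Ω → ℝ) (X : Ω → α) (Y : Ω → β) : ℝ :=
  ∑ b : β, ∑ a : α,
    pr p Y b * Real.negMulLog (pr p (fun s => (X s, Y s)) (a, b) / pr p Y b)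

/-- Mutual information `I(X ; Y) = H(X) − H(X | Y)`. -/
noncomputable def mi {Ω α β : Type*} [Fintype Ω] [Fintype α] [Fintype β]
    (p : Ω → ℝ) (X : Ω → α) (Y : Ω → β) : ℝ :=
  ent p X - condEnt p X Y

/-- Conditional mutual information `I(X ; Y | Z) = H(X | Z) − H(X | Z, Y)`. -/
noncomputable def cmi {Ω α β γ : Type*} [Fintype Ω] [Fintype α] [Fintype β] [Fintype γ]
    (p : Ω → ℝ) (X : Ω → α) (Y : Ω → β) (Z : Ω → γ) : ℝ :=
  condEnt p X Z - condEnt p X (fun s => (Z s, Y s))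

/-- The joint random variable of a family of random variables. -/
def jointFam {Ω ι α : Type*} (y : ι → Ω → α) : Ω → (ι → α) := fun s i => y i s

/-- The joint random variable of the sub-family indexed by a finite set `A`. -/
def jointSet {Ω ι α : Type*} (y : ι → Ω → α) (A : Finset ι) : Ω → (A → α) :=
  fun s i => y i.1 s

/-- The family `y` is mutually conditionally independent given `w`:
the conditional joint distribution factorizes. -/
def CondIndepFam {Ω ι α γ : Type*} [Fintype Ω] [Fintype ι] (p : Ω → ℝ)
    (y : ι → Ω → α) (w : Ω → γ) : Prop :=
  ∀ c : γ, 0 < pr p w c → ∀ a : ι → α,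
    pr p (fun s => (jointFam y s, w s)) (a, c) / pr p w c
      = ∏ i : ι, pr p (fun s => (y i s, w s)) (a i, c) / pr p w c


open Real
set_option linter.unusedSectionVars false

section Basic
variable {Ω : Type*} [Fintype Ω] {p : Ω → ℝ}

lemma pr_nonneg {α : Type*} (hp : ∀ s, 0 ≤ p s) (X : Ω → α) (a : α) : 0 ≤ pr p X a :=
  Finset.sum_nonneg fun s _ => by split <;> [exact hp s; exact le_rfl]

lemma pr_fst_sum {α β : Type*} [Fintype α] (X : Ω → α) (W : Ω → β) (d : β) :
    ∑ a, pr p (fun s => (X s, W s)) (a, d) = pr p W d := by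
  unfold pr
  rw [Finset.sum_comm]
  refine Finset.sum_congr rfl fun s _ => ?_
  by_cases h : W s = d <;> simp [Prod.ext_iff, h]

lemma pr_mid_sum {α β γ : Type*} [Fintype β] (X : Ω → α) (Y : Ω → β) (Z : Ω → γ) (a : α) (c : γ) :
    ∑ b, pr p (fun s => (X s, (Y s, Z s))) (a, (b, c)) = pr p (fun s => (X s, Z s)) (a, c) := by
  unfold pr
  rw [Finset.sum_comm]
  refine Finset.sum_congr rfl fun s _ => ?_
  by_cases h1 : X s = a <;> by_cases h2 : Z s = c <;> simp [Prod.ext_iff, h1, h2]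

end Basic

section Helpers
variable {Ω : Type*} [Fintype Ω] {p : Ω → ℝ}

lemma pr_comp_apply {α β : Type*} (X : Ω → α) {g : α → β} (hg : Function.Injective g) (a : α) :
    pr p (fun s => g (X s)) (g a) = pr p X a := by
  unfold pr; exact Finset.sum_congr rfl fun s _ => by simp [hg.eq_iff]

lemma pr_comp_ne {α β : Type*} (X : Ω → α) (g : α → β) {b : β} (hb : ∀ a, g a ≠ b) :
    pr p (fun s => g (X s)) b = 0 := by
  unfold pr
  refine Finset.sum_eq_zero fun s _ => ?_
  simp [hb (X s)]

lemma sum_comp_inj {α β : Type*} [Fintype α] [Fintype β] {g : α → β}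
    (hg : Function.Injective g) (F : β → ℝ) (h0 : ∀ b, (∀ a, g a ≠ b) → F b = 0) :
    ∑ b, F b = ∑ a, F (g a) := by
  classical
  have h1 : ∑ b ∈ Finset.univ.image g, F b = ∑ a, F (g a) :=
    Finset.sum_image (fun x _ y _ h => hg h)
  rw [← h1]
  symm
  refine Finset.sum_subset (Finset.subset_univ _) fun b _ hb => ?_
  exact h0 b fun a hab => hb (Finset.mem_image.mpr ⟨a, Finset.mem_univ a, hab⟩)

lemma ent_comp {α β : Type*} [Fintype α] [Fintype β] (X : Ω → α) {g : α → β}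
    (hg : Function.Injective g) : ent p (fun s => g (X s)) = ent p X := by
  unfold ent
  rw [sum_comp_inj hg _ (fun b hb => by rw [pr_comp_ne X g hb, Real.negMulLog_zero])]
  exact Finset.sum_congr rfl fun a _ => by rw [pr_comp_apply X hg]

lemma condEnt_comp {α β γ : Type*} [Fintype α] [Fintype β] [Fintype γ]
    (X : Ω → α) (w : Ω → γ) {g : α → β} (hg : Function.Injective g) :
    condEnt p (fun s => g (X s)) w = condEnt p X w := by
  unfold condEnt
  rw [Finset.sum_comm]
  conv_rhs => rw [Finset.sum_comm]
  have hgi : Function.Injective (Prod.map g (id : γ → γ)) :=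
    hg.prodMap Function.injective_id
  rw [sum_comp_inj hg
    (fun b => ∑ c, pr p w c * Real.negMulLog (pr p (fun s => (g (X s), w s)) (b, c) / pr p w c))
    (fun b hb => Finset.sum_eq_zero fun c _ => by
      have : pr p (fun s => (g (X s), w s)) (b, c) = 0 := by
        have := pr_comp_ne (p := p) (fun s => (X s, w s)) (Prod.map g (id : γ → γ))
          (b := (b, c)) (fun ac h => hb ac.1 (congrArg Prod.fst h))
        simpa using this
      rw [this, zero_div, Real.negMulLog_zero, mul_zero])]
  refine Finset.sum_congr rfl fun a _ => Finset.sum_congr rfl fun c _ => ?_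
  have : pr p (fun s => (g (X s), w s)) (g a, c)
      = pr p (fun s => (X s, w s)) (a, c) := by
    have := pr_comp_apply (p := p) (fun s => (X s, w s)) hgi (a, c)
    simpa using this
  rw [this]

lemma mi_comp {α β γ : Type*} [Fintype α] [Fintype β] [Fintype γ]
    (X : Ω → α) (w : Ω → γ) {g : α → β} (hg : Function.Injective g) :
    mi p (fun s => g (X s)) w = mi p X w := by
  unfold mi; rw [ent_comp X hg, condEnt_comp X w hg]

end Helpers


lemma key_term (qv mac mbc mc : ℝ) (h0 : 0 ≤ qv) (h1 : qv ≤ mac) (h2 : qv ≤ mbc) (h3 : mac ≤ mc) :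
    qv * log mac + qv * log mbc - qv * log qv - qv * log mc ≤ mac * mbc / mc - qv := by
  have hmac0 : 0 ≤ mac := le_trans h0 h1
  have hmbc0 : 0 ≤ mbc := le_trans h0 h2
  have hmc0 : 0 ≤ mc := le_trans hmac0 h3
  rcases h0.eq_or_lt with h | h
  · rw [← h]
    simp only [zero_mul, add_zero, sub_zero, zero_sub, neg_zero]
    positivity
  · have hmac : 0 < mac := lt_of_lt_of_le h h1
    have hmbc : 0 < mbc := lt_of_lt_of_le h h2
    have hmc : 0 < mc := lt_of_lt_of_le hmac h3
    have hx : 0 < mac * mbc / (qv * mc) := by positivity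
    have hlog := Real.log_le_sub_one_of_pos hx
    have hrw : log (mac * mbc / (qv * mc)) = log mac + log mbc - log qv - log mc := by
      rw [Real.log_div (by positivity) (by positivity), Real.log_mul hmac.ne' hmbc.ne',
        Real.log_mul h.ne' hmc.ne']
      ring
    rw [hrw] at hlog
    have h4 := mul_le_mul_of_nonneg_left hlog h0
    have hqx : qv * (mac * mbc / (qv * mc)) = mac * mbc / mc := by
      field_simp
    nlinarith [h4, hqx]

lemma negMulLog_submod {α β γ : Type*} [Fintype α] [Fintype β] [Fintype γ]
    (q : α → β → γ → ℝ) (hq : ∀ a b c, 0 ≤ q a b c) :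
    ∑ c, Real.negMulLog (∑ a, ∑ b, q a b c) + ∑ a, ∑ b, ∑ c, Real.negMulLog (q a b c)
      ≤ ∑ a, ∑ c, Real.negMulLog (∑ b, q a b c) + ∑ b, ∑ c, Real.negMulLog (∑ a, q a b c) := by
  classical
  set mAC : α → γ → ℝ := fun a c => ∑ b, q a b c with hmAC
  set mBC : β → γ → ℝ := fun b c => ∑ a, q a b c with hmBC
  set mC : γ → ℝ := fun c => ∑ a, ∑ b, q a b c with hmC
  have hmAC0 : ∀ a c, 0 ≤ mAC a c := fun a c => Finset.sum_nonneg fun b _ => hq a b c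
  have hmBC0 : ∀ b c, 0 ≤ mBC b c := fun b c => Finset.sum_nonneg fun a _ => hq a b c
  have hqAC : ∀ a b c, q a b c ≤ mAC a c := fun a b c =>
    Finset.single_le_sum (fun b _ => hq a b c) (Finset.mem_univ b)
  have hqBC : ∀ a b c, q a b c ≤ mBC b c := fun a b c =>
    Finset.single_le_sum (fun a _ => hq a b c) (Finset.mem_univ a)
  have hACC : ∀ a c, mAC a c ≤ mC c := fun a c =>
    Finset.single_le_sum (fun a _ => Finset.sum_nonneg fun b _ => hq a b c) (Finset.mem_univ a)
  have hBCsum : ∀ c, ∑ b, mBC b c = mC c := fun c => Finset.sum_comm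
  -- termwise bound
  have key : ∀ a b c,
      q a b c * log (mAC a c) + q a b c * log (mBC b c) - q a b c * log (q a b c)
        - q a b c * log (mC c) ≤ mAC a c * mBC b c / mC c - q a b c :=
    fun a b c => key_term _ _ _ _ (hq a b c) (hqAC a b c) (hqBC a b c) (hACC a c)
  have main : ∑ a, ∑ b, ∑ c,
      (q a b c * log (mAC a c) + q a b c * log (mBC b c) - q a b c * log (q a b c)
        - q a b c * log (mC c))
      ≤ ∑ a, ∑ b, ∑ c, (mAC a c * mBC b c / mC c - q a b c) :=
    Finset.sum_le_sum fun a _ => Finset.sum_le_sum fun b _ => Finset.sum_le_sum fun c _ =>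
      key a b c
  -- sum of r equals sum of q
  have hsumq : ∑ a, ∑ b, ∑ c, q a b c = ∑ c, mC c := by
    calc ∑ a, ∑ b, ∑ c, q a b c = ∑ a, ∑ c, ∑ b, q a b c :=
          Finset.sum_congr rfl fun a _ => Finset.sum_comm
      _ = ∑ c, ∑ a, ∑ b, q a b c := Finset.sum_comm
  have hsumr : ∑ a, ∑ b, ∑ c, mAC a c * mBC b c / mC c = ∑ c, mC c := by
    calc ∑ a, ∑ b, ∑ c, mAC a c * mBC b c / mC c
        = ∑ a, ∑ c, ∑ b, mAC a c * mBC b c / mC c :=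
          Finset.sum_congr rfl fun a _ => Finset.sum_comm
      _ = ∑ c, ∑ a, ∑ b, mAC a c * mBC b c / mC c := Finset.sum_comm
      _ = ∑ c, mC c := by
          refine Finset.sum_congr rfl fun c _ => ?_
          have hb : ∀ a, ∑ b, mAC a c * mBC b c / mC c = mAC a c / mC c * mC c := by
            intro a
            rw [← hBCsum c, Finset.mul_sum]
            exact Finset.sum_congr rfl fun b _ => by ring
          rw [Finset.sum_congr rfl fun a _ => hb a]
          by_cases hc : mC c = 0
          · rw [hc]
            simp
          · rw [Finset.sum_congr rfl fun a _ => div_mul_cancel₀ (mAC a c) hc]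
  have hzero : ∑ a, ∑ b, ∑ c, (mAC a c * mBC b c / mC c - q a b c) = 0 := by
    simp only [Finset.sum_sub_distrib]
    rw [hsumr, hsumq]
    ring
  have main2 : ∑ a, ∑ b, ∑ c,
      (q a b c * log (mAC a c) + q a b c * log (mBC b c) - q a b c * log (q a b c)
        - q a b c * log (mC c)) ≤ 0 := le_of_le_of_eq main hzero
  -- expand negMulLog sums into triple sums
  have E1 : ∑ a, ∑ c, Real.negMulLog (mAC a c)
      = ∑ a, ∑ b, ∑ c, -(q a b c * log (mAC a c)) := by
    refine Finset.sum_congr rfl fun a _ => ?_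
    calc ∑ c, Real.negMulLog (mAC a c) = ∑ c, ∑ b, -(q a b c * log (mAC a c)) := by
          refine Finset.sum_congr rfl fun c _ => ?_
          rw [Real.negMulLog, hmAC]
          simp only [neg_mul, Finset.sum_neg_distrib, Finset.sum_mul]
      _ = ∑ b, ∑ c, -(q a b c * log (mAC a c)) := Finset.sum_comm
  have E2 : ∑ b, ∑ c, Real.negMulLog (mBC b c)
      = ∑ a, ∑ b, ∑ c, -(q a b c * log (mBC b c)) := by
    calc ∑ b, ∑ c, Real.negMulLog (mBC b c) = ∑ b, ∑ c, ∑ a, -(q a b c * log (mBC b c)) := by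
          refine Finset.sum_congr rfl fun b _ => Finset.sum_congr rfl fun c _ => ?_
          rw [Real.negMulLog, hmBC]
          simp only [neg_mul, Finset.sum_neg_distrib, Finset.sum_mul]
      _ = ∑ b, ∑ a, ∑ c, -(q a b c * log (mBC b c)) :=
          Finset.sum_congr rfl fun b _ => Finset.sum_comm
      _ = ∑ a, ∑ b, ∑ c, -(q a b c * log (mBC b c)) := Finset.sum_comm
  have E3 : ∑ c, Real.negMulLog (mC c)
      = ∑ a, ∑ b, ∑ c, -(q a b c * log (mC c)) := by
    calc ∑ c, Real.negMulLog (mC c) = ∑ c, ∑ a, ∑ b, -(q a b c * log (mC c)) := by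
          refine Finset.sum_congr rfl fun c _ => ?_
          rw [Real.negMulLog, hmC]
          simp only [neg_mul, Finset.sum_neg_distrib, Finset.sum_mul]
      _ = ∑ a, ∑ c, ∑ b, -(q a b c * log (mC c)) := Finset.sum_comm
      _ = ∑ a, ∑ b, ∑ c, -(q a b c * log (mC c)) :=
          Finset.sum_congr rfl fun a _ => Finset.sum_comm
  have E4 : ∑ a, ∑ b, ∑ c, Real.negMulLog (q a b c)
      = ∑ a, ∑ b, ∑ c, -(q a b c * log (q a b c)) := by
    refine Finset.sum_congr rfl fun a _ => Finset.sum_congr rfl fun b _ =>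
      Finset.sum_congr rfl fun c _ => ?_
    rw [Real.negMulLog, neg_mul]
  rw [E1, E2, E3, E4]
  have expand : ∀ F G H K : α → β → γ → ℝ,
      (∑ a, ∑ b, ∑ c, F a b c) + (∑ a, ∑ b, ∑ c, G a b c)
        - (∑ a, ∑ b, ∑ c, H a b c) - (∑ a, ∑ b, ∑ c, K a b c)
      = ∑ a, ∑ b, ∑ c, (F a b c + G a b c - H a b c - K a b c) := by
    intro F G H K
    simp only [Finset.sum_sub_distrib, Finset.sum_add_distrib]
  have := expand (fun a b c => -(q a b c * log (mAC a c)))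
    (fun a b c => -(q a b c * log (mBC b c)))
    (fun a b c => -(q a b c * log (q a b c)))
    (fun a b c => -(q a b c * log (mC c)))
  have hcomb : (∑ a, ∑ b, ∑ c, -(q a b c * log (mAC a c)))
      + (∑ a, ∑ b, ∑ c, -(q a b c * log (mBC b c)))
      - (∑ a, ∑ b, ∑ c, -(q a b c * log (q a b c)))
      - (∑ a, ∑ b, ∑ c, -(q a b c * log (mC c)))
      = -∑ a, ∑ b, ∑ c,
        (q a b c * log (mAC a c) + q a b c * log (mBC b c) - q a b c * log (q a b c)
          - q a b c * log (mC c)) := by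
    rw [this, ← Finset.sum_neg_distrib]
    refine Finset.sum_congr rfl fun a _ => ?_
    rw [← Finset.sum_neg_distrib]
    refine Finset.sum_congr rfl fun b _ => ?_
    rw [← Finset.sum_neg_distrib]
    exact Finset.sum_congr rfl fun c _ => by ring
  linarith [hcomb, main2]


section EntSub
variable {Ω : Type*} [Fintype Ω] {p : Ω → ℝ}

lemma ent_submod {α β γ : Type*} [Fintype α] [Fintype β] [Fintype γ]
    (hp : ∀ s, 0 ≤ p s) (X : Ω → α) (Y : Ω → β) (Z : Ω → γ) :
    ent p (fun s => (X s, (Y s, Z s))) + ent p Z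
      ≤ ent p (fun s => (X s, Z s)) + ent p (fun s => (Y s, Z s)) := by
  have key := negMulLog_submod (fun a b c => pr p (fun s => (X s, (Y s, Z s))) (a, (b, c)))
    (fun a b c => pr_nonneg hp _ _)
  have e1 : ent p (fun s => (X s, (Y s, Z s)))
      = ∑ a, ∑ b, ∑ c, Real.negMulLog (pr p (fun s => (X s, (Y s, Z s))) (a, (b, c))) := by
    rw [ent, Fintype.sum_prod_type]
    exact Finset.sum_congr rfl fun a _ => Fintype.sum_prod_type _
  have e2 : ent p Z
      = ∑ c, Real.negMulLog (∑ a, ∑ b, pr p (fun s => (X s, (Y s, Z s))) (a, (b, c))) := by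
    rw [ent]
    refine Finset.sum_congr rfl fun c _ => ?_
    congr 1
    symm
    calc ∑ a, ∑ b, pr p (fun s => (X s, (Y s, Z s))) (a, (b, c))
        = ∑ b, ∑ a, pr p (fun s => (X s, (Y s, Z s))) (a, (b, c)) := Finset.sum_comm
      _ = ∑ b, pr p (fun s => (Y s, Z s)) (b, c) :=
          Finset.sum_congr rfl fun b _ => pr_fst_sum X (fun s => (Y s, Z s)) (b, c)
      _ = pr p Z c := pr_fst_sum Y Z c
  have e3 : ent p (fun s => (X s, Z s))
      = ∑ a, ∑ c, Real.negMulLog (∑ b, pr p (fun s => (X s, (Y s, Z s))) (a, (b, c))) := by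
    rw [ent, Fintype.sum_prod_type]
    refine Finset.sum_congr rfl fun a _ => Finset.sum_congr rfl fun c _ => ?_
    rw [pr_mid_sum X Y Z a c]
  have e4 : ent p (fun s => (Y s, Z s))
      = ∑ b, ∑ c, Real.negMulLog (∑ a, pr p (fun s => (X s, (Y s, Z s))) (a, (b, c))) := by
    rw [ent, Fintype.sum_prod_type]
    refine Finset.sum_congr rfl fun b _ => Finset.sum_congr rfl fun c _ => ?_
    rw [pr_fst_sum X (fun s => (Y s, Z s)) (b, c)]
  rw [e1, e2, e3, e4]
  linarith [key]

lemma condEnt_add {α β γ : Type*} [Fintype α] [Fintype β] [Fintype γ]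
    (hp : ∀ s, 0 ≤ p s) (X : Ω → α) (Y : Ω → β) (w : Ω → γ)
    (hfact : ∀ c, 0 < pr p w c → ∀ a b,
      pr p (fun s => ((X s, Y s), w s)) ((a, b), c) * pr p w c
        = pr p (fun s => (X s, w s)) (a, c) * pr p (fun s => (Y s, w s)) (b, c)) :
    condEnt p (fun s => (X s, Y s)) w = condEnt p X w + condEnt p Y w := by
  unfold condEnt
  rw [← Finset.sum_add_distrib]
  refine Finset.sum_congr rfl fun c _ => ?_
  rcases (pr_nonneg hp w c).eq_or_lt with hc | hc
  · simp [← hc]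
  · set u := pr p w c with hu
    set qX : α → ℝ := fun a => pr p (fun s => (X s, w s)) (a, c) / u with hqX
    set qY : β → ℝ := fun b => pr p (fun s => (Y s, w s)) (b, c) / u with hqY
    have hqX1 : ∑ a, qX a = 1 := by
      rw [hqX]
      rw [← Finset.sum_div, pr_fst_sum X w c, div_self hc.ne']
    have hqY1 : ∑ b, qY b = 1 := by
      rw [hqY]
      rw [← Finset.sum_div, pr_fst_sum Y w c, div_self hc.ne']
    have hfac' : ∀ a b,
        pr p (fun s => ((X s, Y s), w s)) ((a, b), c) / u = qX a * qY b := by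
      intro a b
      have h := hfact c hc a b
      rw [hqX, hqY, div_mul_div_comm, eq_div_iff (by positivity)]
      have e : pr p (fun s => ((X s, Y s), w s)) ((a, b), c) / u * (u * u)
          = pr p (fun s => ((X s, Y s), w s)) ((a, b), c) * u := by field_simp
      rw [e]
      exact h
    rw [Fintype.sum_prod_type]
    calc ∑ a, ∑ b, u * Real.negMulLog (pr p (fun s => ((X s, Y s), w s)) ((a, b), c) / u)
        = ∑ a, ∑ b, u * (qY b * Real.negMulLog (qX a) + qX a * Real.negMulLog (qY b)) := by
          refine Finset.sum_congr rfl fun a _ => Finset.sum_congr rfl fun b _ => ?_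
          rw [hfac' a b, Real.negMulLog_mul]
      _ = ∑ a, (u * Real.negMulLog (qX a) + u * (qX a * ∑ b, Real.negMulLog (qY b))) := by
          refine Finset.sum_congr rfl fun a _ => ?_
          rw [← Finset.mul_sum, Finset.sum_add_distrib, ← Finset.sum_mul, hqY1,
            ← Finset.mul_sum]
          ring
      _ = ∑ a, u * Real.negMulLog (qX a) + ∑ b, u * Real.negMulLog (qY b) := by
          rw [Finset.sum_add_distrib]
          congr 1
          calc ∑ a, u * (qX a * ∑ b, Real.negMulLog (qY b))
              = (∑ a, qX a) * (u * ∑ b, Real.negMulLog (qY b)) := by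
                rw [Finset.sum_mul]
                exact Finset.sum_congr rfl fun a _ => by ring
            _ = ∑ b, u * Real.negMulLog (qY b) := by rw [hqX1, one_mul, Finset.mul_sum]

end EntSub

lemma pr_fst_sum' {Ω α β : Type*} [Fintype Ω] {p : Ω → ℝ} [Fintype α] (X : Ω → α) (W : Ω → β) (d : β) :
    ∑ a, pr p (fun s => (X s, W s)) (a, d) = pr p W d := by
  unfold pr
  rw [Finset.sum_comm]
  refine Finset.sum_congr rfl fun s _ => ?_
  by_cases h : W s = d <;> simp [Prod.ext_iff, h]

section Fact
variable {Ω ι α γ : Type*} [Fintype Ω] [Fintype ι] [Fintype α] [Fintype γ] [DecidableEq ι]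

lemma fintype_prod_congr {σ M : Type*} [CommMonoid M] {i1 i2 : Fintype σ} {F G : σ → M}
    (h : ∀ x, F x = G x) :
    @Finset.prod σ M _ (@Finset.univ σ i1) F = @Finset.prod σ M _ (@Finset.univ σ i2) G := by
  rw [Subsingleton.elim i1 i2]
  exact Finset.prod_congr rfl fun x _ => h x

lemma pr_jointSet_eq_sum (p : Ω → ℝ) (y : ι → Ω → α) (w : Ω → γ)
    (S : Finset ι) (f : S → α) (c : γ) :
    pr p (fun s => (jointSet y S s, w s)) (f, c)
      = ∑ g : ι → α, if (∀ i : S, g i.1 = f i)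
          then pr p (fun s => (jointFam y s, w s)) (g, c) else 0 := by
  classical
  calc pr p (fun s => (jointSet y S s, w s)) (f, c)
      = ∑ s : Ω, ∑ g : ι → α, (if (∀ i : S, g i.1 = f i)
          then (if (jointFam y s, w s) = (g, c) then p s else 0) else 0) := by
        unfold pr
        refine Finset.sum_congr rfl fun s _ => ?_
        rw [Finset.sum_eq_single (jointFam y s)]
        · by_cases h1 : ∀ i : S, y i.1 s = f i <;> by_cases h2 : w s = c <;>
            simp [jointSet, jointFam, Prod.ext_iff, funext_iff, h1, h2]
        · intro g _ hg
          have hne : jointFam y s ≠ g := fun h => hg h.symm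
          simp [Prod.ext_iff, hne]
        · exact fun h => absurd (Finset.mem_univ _) h
    _ = ∑ g : ι → α, ∑ s : Ω, (if (∀ i : S, g i.1 = f i)
          then (if (jointFam y s, w s) = (g, c) then p s else 0) else 0) := Finset.sum_comm
    _ = ∑ g : ι → α, (if (∀ i : S, g i.1 = f i)
          then pr p (fun s => (jointFam y s, w s)) (g, c) else 0) := by
        refine Finset.sum_congr rfl fun g _ => ?_
        split <;> simp [pr]

lemma sum_prod_restrict (S : Finset ι) (q : ι → α → ℝ) (hq1 : ∀ i, ∑ a, q i a = 1)
    (f : S → α) :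
    ∑ g : ι → α, (if (∀ i : S, g i.1 = f i) then ∏ i, q i (g i) else 0)
      = ∏ i : S, q i.1 (f i) := by
  classical
  rw [← Equiv.sum_comp (Equiv.piEquivPiSubtypeProd (fun i => i ∈ S) (fun _ => α)).symm]
  rw [Fintype.sum_prod_type]
  have hs : ∀ (u : {x // x ∈ S} → α) (v : {x // ¬ x ∈ S} → α) (i : S),
      (Equiv.piEquivPiSubtypeProd (fun i => i ∈ S) (fun _ => α)).symm (u, v) i.1 = u i := by
    intro u v i
    simp [Equiv.piEquivPiSubtypeProd, dif_pos i.2]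
  have hs' : ∀ (u : {x // x ∈ S} → α) (v : {x // ¬ x ∈ S} → α) (i : {x // ¬ x ∈ S}),
      (Equiv.piEquivPiSubtypeProd (fun i => i ∈ S) (fun _ => α)).symm (u, v) i.1 = v i := by
    intro u v i
    simp [Equiv.piEquivPiSubtypeProd, dif_neg i.2]
  have hprod : ∀ (u : {x // x ∈ S} → α) (v : {x // ¬ x ∈ S} → α),
      ∏ i, q i ((Equiv.piEquivPiSubtypeProd (fun i => i ∈ S) (fun _ => α)).symm (u, v) i)
        = (∏ i : S, q i.1 (u i)) * ∏ i : {x // ¬ x ∈ S}, q i.1 (v i) := by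
    intro u v
    rw [← Fintype.prod_subtype_mul_prod_subtype (fun i => i ∈ S)
      (fun i => q i ((Equiv.piEquivPiSubtypeProd (fun i => i ∈ S) (fun _ => α)).symm (u, v) i))]
    congr 1
    · exact fintype_prod_congr (fun i => by rw [hs u v i])
    · exact fintype_prod_congr (fun i => by rw [hs' u v i])
  have hcond : ∀ (u : {x // x ∈ S} → α) (v : {x // ¬ x ∈ S} → α),
      (∀ i : S, (Equiv.piEquivPiSubtypeProd (fun i => i ∈ S) (fun _ => α)).symm (u, v) i.1 = f i)
        ↔ u = f := by
    intro u v
    constructor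
    · intro h; funext i; rw [← hs u v i]; exact h i
    · intro h i; rw [hs u v i, h]
  calc ∑ u : {x // x ∈ S} → α, ∑ v : {x // ¬ x ∈ S} → α,
        (if (∀ i : S, (Equiv.piEquivPiSubtypeProd (fun i => i ∈ S) (fun _ => α)).symm (u, v) i.1 = f i)
          then ∏ i, q i ((Equiv.piEquivPiSubtypeProd (fun i => i ∈ S) (fun _ => α)).symm (u, v) i) else 0)
      = ∑ u : {x // x ∈ S} → α, ∑ v : {x // ¬ x ∈ S} → α,
        (if u = f then (∏ i : S, q i.1 (u i)) * ∏ i : {x // ¬ x ∈ S}, q i.1 (v i) else 0) := by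
        refine Finset.sum_congr rfl fun u _ => Finset.sum_congr rfl fun v _ => ?_
        rw [hprod u v]
        by_cases h : u = f
        · rw [if_pos ((hcond u v).mpr h), if_pos h]
        · rw [if_neg (fun hh => h ((hcond u v).mp hh)), if_neg h]
    _ = ∏ i : S, q i.1 (f i) := by
        rw [Finset.sum_eq_single f]
        · simp only [if_true, eq_self_iff_true]
          rw [← Finset.mul_sum]
          have hv1 : ∑ v : {x // ¬ x ∈ S} → α, ∏ i : {x // ¬ x ∈ S}, q i.1 (v i) = 1 := by
            have := Finset.prod_univ_sum (fun _ : {x // ¬ x ∈ S} => (Finset.univ : Finset α))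
              (fun i a => q i.1 a)
            rw [Fintype.piFinset_univ] at this
            rw [← this]
            exact Finset.prod_eq_one fun i _ => hq1 i.1
          rw [hv1, mul_one]
        · intro u _ hu
          simp [hu]
        · intro h; exact absurd (Finset.mem_univ _) h


lemma q_sum_one (p : Ω → ℝ) (y : ι → Ω → α) (w : Ω → γ) {c : γ} (hc : 0 < pr p w c) (i : ι) :
    ∑ a, pr p (fun s => (y i s, w s)) (a, c) / pr p w c = 1 := by
  rw [← Finset.sum_div, pr_fst_sum' (y i) w c, div_self hc.ne']

lemma factor (p : Ω → ℝ) (y : ι → Ω → α) (w : Ω → γ) (hind : CondIndepFam p y w)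
    (S : Finset ι) {c : γ} (hc : 0 < pr p w c) (f : S → α) :
    pr p (fun s => (jointSet y S s, w s)) (f, c) / pr p w c
      = ∏ i : S, pr p (fun s => (y i.1 s, w s)) (f i, c) / pr p w c := by
  classical
  rw [pr_jointSet_eq_sum p y w S f c]
  have hfac : ∀ g : ι → α, pr p (fun s => (jointFam y s, w s)) (g, c)
      = pr p w c * ∏ i, (pr p (fun s => (y i s, w s)) (g i, c) / pr p w c) := by
    intro g
    have h := hind c hc g
    rw [← h, mul_div_cancel₀ _ hc.ne']
  calc (∑ g : ι → α, if (∀ i : S, g i.1 = f i)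
          then pr p (fun s => (jointFam y s, w s)) (g, c) else 0) / pr p w c
      = ∑ g : ι → α, (if (∀ i : S, g i.1 = f i)
          then ∏ i, (pr p (fun s => (y i s, w s)) (g i, c) / pr p w c) else 0) := by
        rw [Finset.sum_div]
        refine Finset.sum_congr rfl fun g _ => ?_
        split
        · rw [hfac g, mul_div_cancel_left₀ _ hc.ne']
        · exact zero_div _
    _ = ∏ i : S, pr p (fun s => (y i.1 s, w s)) (f i, c) / pr p w c :=
        sum_prod_restrict S (fun i a => pr p (fun s => (y i s, w s)) (a, c) / pr p w c)
          (fun i => q_sum_one p y w hc i) f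

/-- Extension of a function on `S` by value `a` at `i`. -/
noncomputable def ext1 (i : ι) (S : Finset ι) (a : α) (f : S → α) :
    ((insert i S : Finset ι) : Type _) → α :=
  fun j => if hj : j.1 ∈ S then f ⟨j.1, hj⟩ else a

lemma prod_ext1 {M : Type*} [CommMonoid M] {i : ι} {S : Finset ι} (hiS : i ∉ S)
    (F : ι → α → M) (a : α) (f : S → α) :
    ∏ j : (insert i S : Finset ι), F j.1 (ext1 i S a f j)
      = F i a * ∏ j : S, F j.1 (f j) := by
  classical
  have h1 : ∏ j : (insert i S : Finset ι), F j.1 (ext1 i S a f j)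
      = ∏ j ∈ insert i S, F j (if hj : j ∈ S then f ⟨j, hj⟩ else a) := by
    rw [← Finset.prod_coe_sort (insert i S) (fun j => F j (if hj : j ∈ S then f ⟨j, hj⟩ else a))]
    exact Finset.prod_congr rfl fun j _ => rfl
  rw [h1, Finset.prod_insert hiS, dif_neg hiS]
  congr 1
  rw [← Finset.prod_coe_sort S (fun j => F j (if hj : j ∈ S then f ⟨j, hj⟩ else a))]
  exact Finset.prod_congr rfl fun j _ => by rw [dif_pos j.2]

end Fact



section Recode
variable {ι α : Type*} [DecidableEq ι]

noncomputable def eIns (i : ι) (S : Finset ι) :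
    ({x // x ∈ insert i S} → α) → α × ({x // x ∈ S} → α) :=
  fun h => (h ⟨i, Finset.mem_insert_self i S⟩, fun j => h ⟨j.1, Finset.mem_insert_of_mem j.2⟩)

lemma eIns_inj (i : ι) (S : Finset ι) : Function.Injective (eIns (α := α) i S) := by
  intro h h' hh
  funext j
  rcases Finset.mem_insert.mp j.2 with hj | hj
  · have hjj : j = ⟨i, Finset.mem_insert_self i S⟩ := Subtype.ext hj
    rw [hjj]
    exact congrArg Prod.fst hh
  · have hjj : j = ⟨j.1, Finset.mem_insert_of_mem hj⟩ := Subtype.ext rfl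
    rw [hjj]
    exact congrFun (congrArg Prod.snd hh) ⟨j.1, hj⟩

lemma eIns_ext1 {i : ι} {S : Finset ι} [Fintype ι] [Fintype α] (hiS : i ∉ S) (a : α)
    (f : {x // x ∈ S} → α) : eIns i S (ext1 i S a f) = (a, f) := by
  unfold eIns ext1
  refine Prod.ext ?_ ?_
  · exact dif_neg hiS
  · funext j
    exact dif_pos j.2

end Recode

section MainProof
variable {Ω ι α γ : Type*} [Fintype Ω] [Fintype ι] [DecidableEq ι] [Fintype α] [Fintype γ]
variable {p : Ω → ℝ} {y : ι → Ω → α} {w : Ω → γ}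

lemma pr_insert_pair (p : Ω → ℝ) (y : ι → Ω → α) (w : Ω → γ) {i : ι} {S : Finset ι}
    (hiS : i ∉ S) (a : α) (f : {x // x ∈ S} → α) (c : γ) :
    pr p (fun s => ((y i s, jointSet y S s), w s)) ((a, f), c)
      = pr p (fun s => (jointSet y (insert i S) s, w s)) (ext1 i S a f, c) := by
  have hinj : Function.Injective (Prod.map (eIns (α := α) i S) (id : γ → γ)) :=
    (eIns_inj i S).prodMap Function.injective_id
  have hpt : (Prod.map (eIns (α := α) i S) (id : γ → γ)) (ext1 i S a f, c) = ((a, f), c) := by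
    rw [Prod.map]
    simp [eIns_ext1 hiS]
  calc pr p (fun s => ((y i s, jointSet y S s), w s)) ((a, f), c)
      = pr p (fun s => Prod.map (eIns (α := α) i S) (id : γ → γ) (jointSet y (insert i S) s, w s))
          ((Prod.map (eIns (α := α) i S) (id : γ → γ)) (ext1 i S a f, c)) := by
          rw [hpt]; rfl
    _ = pr p (fun s => (jointSet y (insert i S) s, w s)) (ext1 i S a f, c) :=
        pr_comp_apply _ hinj _

lemma hfact_pair (hp : ∀ s, 0 ≤ p s) (hind : CondIndepFam p y w) {i : ι} {S : Finset ι}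
    (hiS : i ∉ S) : ∀ c : γ, 0 < pr p w c → ∀ (a : α) (f : {x // x ∈ S} → α),
    pr p (fun s => ((y i s, jointSet y S s), w s)) ((a, f), c) * pr p w c
      = pr p (fun s => (y i s, w s)) (a, c) * pr p (fun s => (jointSet y S s, w s)) (f, c) := by
  intro c hc a f
  have e1 : pr p (fun s => ((y i s, jointSet y S s), w s)) ((a, f), c) / pr p w c
      = (pr p (fun s => (y i s, w s)) (a, c) / pr p w c)
        * ∏ j : S, pr p (fun s => (y j.1 s, w s)) (f j, c) / pr p w c := by
    rw [pr_insert_pair p y w hiS a f c, factor p y w hind (insert i S) hc (ext1 i S a f)]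
    exact prod_ext1 hiS (fun j x => pr p (fun s => (y j s, w s)) (x, c) / pr p w c) a f
  have e2 := factor p y w hind S hc f
  rw [← e2] at e1
  have hu : pr p w c ≠ 0 := hc.ne'
  field_simp at e1
  exact e1

lemma pr_triple (p : Ω → ℝ) (y : ι → Ω → α) (w : Ω → γ) (i₁ : ι) {i₂ : ι} {S : Finset ι}
    (h2 : i₂ ∉ S) (a b : α) (f : {x // x ∈ S} → α) (c : γ) :
    pr p (fun s => ((y i₁ s, (y i₂ s, jointSet y S s)), w s)) ((a, (b, f)), c)
      = pr p (fun s => ((y i₁ s, jointSet y (insert i₂ S) s), w s)) ((a, ext1 i₂ S b f), c) := by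
  have hinj : Function.Injective
      (Prod.map (Prod.map (id : α → α) (eIns (α := α) i₂ S)) (id : γ → γ)) :=
    (Function.injective_id.prodMap (eIns_inj i₂ S)).prodMap Function.injective_id
  have hpt : (Prod.map (Prod.map (id : α → α) (eIns (α := α) i₂ S)) (id : γ → γ))
      ((a, ext1 i₂ S b f), c) = ((a, (b, f)), c) := by
    rw [Prod.map, Prod.map]
    simp [eIns_ext1 h2]
  calc pr p (fun s => ((y i₁ s, (y i₂ s, jointSet y S s)), w s)) ((a, (b, f)), c)
      = pr p (fun s => Prod.map (Prod.map (id : α → α) (eIns (α := α) i₂ S)) (id : γ → γ)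
            ((y i₁ s, jointSet y (insert i₂ S) s), w s))
          ((Prod.map (Prod.map (id : α → α) (eIns (α := α) i₂ S)) (id : γ → γ))
            ((a, ext1 i₂ S b f), c)) := by
          rw [hpt]
          rfl
    _ = pr p (fun s => ((y i₁ s, jointSet y (insert i₂ S) s), w s)) ((a, ext1 i₂ S b f), c) :=
        pr_comp_apply _ hinj _

lemma hfact_triple (hp : ∀ s, 0 ≤ p s) (hind : CondIndepFam p y w) {i₁ i₂ : ι} {S : Finset ι}
    (hne : i₁ ≠ i₂) (h1 : i₁ ∉ S) (h2 : i₂ ∉ S) :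
    ∀ c : γ, 0 < pr p w c → ∀ (a : α) (bf : α × ({x // x ∈ S} → α)),
    pr p (fun s => ((y i₁ s, (y i₂ s, jointSet y S s)), w s)) ((a, bf), c) * pr p w c
      = pr p (fun s => (y i₁ s, w s)) (a, c)
        * pr p (fun s => ((y i₂ s, jointSet y S s), w s)) (bf, c) := by
  intro c hc a bf
  obtain ⟨b, f⟩ := bf
  have h1B : i₁ ∉ insert i₂ S := by
    intro h
    rcases Finset.mem_insert.mp h with h | h
    · exact hne h
    · exact h1 h
  rw [pr_triple p y w i₁ h2 a b f c, pr_insert_pair p y w h2 b f c]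
  exact hfact_pair hp hind h1B c hc a (ext1 i₂ S b f)

end MainProof

/-- the BatchBALD set function `f(A) = I(A ; ω)` is submodular
when the ground set of variables is mutually conditionally independent given `ω`. -/
theorem stmt_4 {Ω ι α γ : Type*} [Fintype Ω] [Fintype ι] [DecidableEq ι]
    [Fintype α] [Fintype γ]
    (p : Ω → ℝ) (hp : ∀ s, 0 ≤ p s) (hsum : ∑ s, p s = 1)
    (y : ι → Ω → α) (w : Ω → γ) (hind : CondIndepFam p y w)
    (A : Finset ι) (i₁ i₂ : ι) (hne : i₁ ≠ i₂) (h₁ : i₁ ∉ A) (h₂ : i₂ ∉ A) :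
    mi p (jointSet y (insert i₁ A)) w + mi p (jointSet y (insert i₂ A)) w
      ≥ mi p (jointSet y (insert i₁ (insert i₂ A))) w + mi p (jointSet y A) w := by
  classical
  have m1 : mi p (jointSet y (insert i₁ A)) w = mi p (fun s => (y i₁ s, jointSet y A s)) w :=
    (mi_comp (jointSet y (insert i₁ A)) w (eIns_inj i₁ A)).symm
  have m2 : mi p (jointSet y (insert i₂ A)) w = mi p (fun s => (y i₂ s, jointSet y A s)) w :=
    (mi_comp (jointSet y (insert i₂ A)) w (eIns_inj i₂ A)).symm
  have hg : Function.Injective (fun h : {x // x ∈ insert i₁ (insert i₂ A)} → α =>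
      Prod.map (id : α → α) (eIns (α := α) i₂ A) (eIns i₁ (insert i₂ A) h)) :=
    (Function.injective_id.prodMap (eIns_inj i₂ A)).comp (eIns_inj i₁ (insert i₂ A))
  have m3 : mi p (jointSet y (insert i₁ (insert i₂ A))) w
      = mi p (fun s => (y i₁ s, (y i₂ s, jointSet y A s))) w :=
    (mi_comp (jointSet y (insert i₁ (insert i₂ A))) w hg).symm
  rw [m1, m2, m3]
  have cE1 : condEnt p (fun s => (y i₁ s, jointSet y A s)) w
      = condEnt p (y i₁) w + condEnt p (jointSet y A) w :=
    condEnt_add hp _ _ w (hfact_pair hp hind h₁)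
  have cE2 : condEnt p (fun s => (y i₂ s, jointSet y A s)) w
      = condEnt p (y i₂) w + condEnt p (jointSet y A) w :=
    condEnt_add hp _ _ w (hfact_pair hp hind h₂)
  have cE3 : condEnt p (fun s => (y i₁ s, (y i₂ s, jointSet y A s))) w
      = condEnt p (y i₁) w + condEnt p (fun s => (y i₂ s, jointSet y A s)) w :=
    condEnt_add hp _ _ w (hfact_triple hp hind hne h₁ h₂)
  have eS := ent_submod hp (y i₁) (y i₂) (jointSet y A)
  unfold mi
  linarith [eS, cE1, cE2, cE3]
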